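/- Let p be a degree 4 polynomial with four distinct real roots and ratio vector (u,v,w). Then 1/(4(1-v)) < w < 1/(4(1-u)(1-v)). -/

import Mathlib

open Polynomial

set_option maxHeartbeats 1000000 in
theorem ratio_w_bounds (r₁ r₂ r₃ r₄ x₁ x₂ x₃ u v w : ℝ)
    (hr12 : r₁ < r₂) (hr23 : r₂ < r₃) (hr34 : r₃ < r₄)
    (hx12 : x₁ < x₂) (hx23 : x₂ < x₃)
    (p : Polynomial ℝ)
    (hp : p = (X - C r₁) * (X - C r₂) * (X - C r₃) * (X - C r₄))
    (hc1 : p.derivative.eval x₁ = 0) (hc2 : p.derivative.eval x₂ = 0)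
    (hc3 : p.derivative.eval x₃ = 0)
    (hu : u = (x₁ - r₁) / (r₂ - r₁)) (hv : v = (x₂ - r₂) / (r₃ - r₂))
    (hw : w = (x₃ - r₃) / (r₄ - r₃)) :
    1 / (4 * (1 - v)) < w ∧ w < 1 / (4 * (1 - u) * (1 - v)) := by
  have hd : ∀ t : ℝ, p.derivative.eval t =
      4*t^3 - 3*(r₁+r₂+r₃+r₄)*t^2
      + 2*(r₁*r₂+r₁*r₃+r₁*r₄+r₂*r₃+r₂*r₄+r₃*r₄)*t
      - (r₁*r₂*r₃+r₁*r₂*r₄+r₁*r₃*r₄+r₂*r₃*r₄) := by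
    intro t
    simp [hp, derivative_mul, derivative_sub, eval_mul, eval_sub, eval_add]
    ring
  rw [hd] at hc1 hc2 hc3
  have h12 : x₁ - x₂ ≠ 0 := by intro h; nlinarith
  have h13 : x₁ - x₃ ≠ 0 := by intro h; nlinarith
  have h23 : x₂ - x₃ ≠ 0 := by intro h; nlinarith
  have eA : 3*(r₁+r₂+r₃+r₄) = 4*(x₁+x₂+x₃) := by
    have h : (3*(r₁+r₂+r₃+r₄) - 4*(x₁+x₂+x₃)) * ((x₁-x₂)*(x₁-x₃)*(x₂-x₃)) = 0 := by
      linear_combination -(x₂-x₃)*hc1 + (x₁-x₃)*hc2 - (x₁-x₂)*hc3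
    have hne := mul_ne_zero (mul_ne_zero h12 h13) h23
    have := (mul_eq_zero.mp h).resolve_right hne
    linarith
  have eB : 2*(r₁*r₂+r₁*r₃+r₁*r₄+r₂*r₃+r₂*r₄+r₃*r₄) = 4*(x₁*x₂+x₁*x₃+x₂*x₃) := by
    have h : (2*(r₁*r₂+r₁*r₃+r₁*r₄+r₂*r₃+r₂*r₄+r₃*r₄) - 4*(x₁*x₂+x₁*x₃+x₂*x₃)) * (x₁-x₂) = 0 := by
      linear_combination hc1 - hc2 + (x₁^2-x₂^2)*eA
    have := (mul_eq_zero.mp h).resolve_right h12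
    linarith
  have eC : r₁*r₂*r₃+r₁*r₂*r₄+r₁*r₃*r₄+r₂*r₃*r₄ = 4*(x₁*x₂*x₃) := by
    linear_combination -hc1 - x₁^2*eA + x₁*eB
  have key : ∀ t : ℝ, p.derivative.eval t = 4*(t-x₁)*(t-x₂)*(t-x₃) := by
    intro t
    rw [hd t]
    linear_combination -t^2*eA + t*eB - eC
  have hpe : ∀ t : ℝ, p.eval t = (t-r₁)*(t-r₂)*(t-r₃)*(t-r₄) := by
    intro t; simp [hp]
  have factor_zero : ∀ y : ℝ, p.derivative.eval y = 0 → y = x₁ ∨ y = x₂ ∨ y = x₃ := by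
    intro y h
    rw [key y] at h
    by_contra hcon
    push_neg at hcon
    obtain ⟨n1, n2, n3⟩ := hcon
    exact mul_ne_zero (mul_ne_zero (mul_ne_zero (by norm_num : (4:ℝ) ≠ 0)
      (sub_ne_zero.mpr n1)) (sub_ne_zero.mpr n2)) (sub_ne_zero.mpr n3) (by linarith)
  -- Rolle on each root interval
  have rolle : ∀ a b : ℝ, a < b → p.eval a = 0 → p.eval b = 0 →
      ∃ y ∈ Set.Ioo a b, p.derivative.eval y = 0 := by
    intro a b hab ha hb
    obtain ⟨y, hy, hdy⟩ := exists_deriv_eq_zero hab (p.continuous.continuousOn)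
      (by rw [ha, hb])
    exact ⟨y, hy, by rw [← p.deriv]; exact hdy⟩
  obtain ⟨y₁, hy₁, hdy₁⟩ := rolle r₁ r₂ hr12 (by rw [hpe]; ring) (by rw [hpe]; ring)
  obtain ⟨y₂, hy₂, hdy₂⟩ := rolle r₂ r₃ hr23 (by rw [hpe]; ring) (by rw [hpe]; ring)
  obtain ⟨y₃, hy₃, hdy₃⟩ := rolle r₃ r₄ hr34 (by rw [hpe]; ring) (by rw [hpe]; ring)
  have m1 := factor_zero y₁ hdy₁
  have m2 := factor_zero y₂ hdy₂
  have m3 := factor_zero y₃ hdy₃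
  have hxy : x₁ = y₁ ∧ x₂ = y₂ ∧ x₃ = y₃ := by
    clear hd hc1 hc2 hc3 eA eB eC key hpe factor_zero rolle hdy₁ hdy₂ hdy₃ hp p
    obtain ⟨a1, a2⟩ := hy₁
    obtain ⟨b1, b2⟩ := hy₂
    obtain ⟨c1, c2⟩ := hy₃
    rcases m1 with h|h|h <;> rcases m2 with h'|h'|h' <;> rcases m3 with h''|h''|h'' <;>
      exact ⟨by linarith, by linarith, by linarith⟩
  obtain ⟨hx1, hx2, hx3⟩ := hxy
  have hr1x1 : r₁ < x₁ := hx1 ▸ hy₁.1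
  have hx1r2 : x₁ < r₂ := hx1 ▸ hy₁.2
  have hr2x2 : r₂ < x₂ := hx2 ▸ hy₂.1
  have hx2r3 : x₂ < r₃ := hx2 ▸ hy₂.2
  have hr3x3 : r₃ < x₃ := hx3 ▸ hy₃.1
  have hx3r4 : x₃ < r₄ := hx3 ▸ hy₃.2
  -- the key identity at r₃
  have hI : 4*(r₃-x₁)*(r₃-x₂)*(r₃-x₃) = (r₃-r₁)*(r₃-r₂)*(r₃-r₄) := by
    have h1 := key r₃
    have h2 := hd r₃
    rw [h2] at h1
    linear_combination -h1
  have ha : (0:ℝ) < r₂ - r₁ := by linarith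
  have hb : (0:ℝ) < r₃ - r₂ := by linarith
  have hcc : (0:ℝ) < r₄ - r₃ := by linarith
  have hA3 : (0:ℝ) < r₃ - x₁ := by linarith
  have hB3 : (0:ℝ) < r₃ - x₂ := by linarith
  have hC3 : (0:ℝ) < x₃ - r₃ := by linarith
  have hE : (0:ℝ) < r₂ - x₁ := by linarith
  have hF : (0:ℝ) < x₁ - r₁ := by linarith
  subst hu hv hw
  have h1v : 1 - (x₂ - r₂) / (r₃ - r₂) = (r₃ - x₂)/(r₃ - r₂) := by
    field_simp
    ring
  have h1u : 1 - (x₁ - r₁) / (r₂ - r₁) = (r₂ - x₁)/(r₂ - r₁) := by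
    field_simp
    ring
  have G1 : (r₄-r₃)*(r₃-r₂) < 4*(x₃-r₃)*(r₃-x₂) := by
    nlinarith [hI, mul_pos (mul_pos hb hcc) hF, hA3, mul_pos hb hcc]
  have G2 : (x₃-r₃)*(4*(r₂-x₁)*(r₃-x₂)) < (r₂-r₁)*(r₃-r₂)*(r₄-r₃) := by
    nlinarith [hI, mul_pos (mul_pos (mul_pos hC3 hB3) hb) hF, hA3,
      mul_pos (mul_pos hC3 hB3) hF, mul_pos hC3 hB3]
  constructor
  · rw [h1v, div_lt_div_iff₀ (by positivity) hcc,
      show (x₃-r₃)*(4*((r₃-x₂)/(r₃-r₂))) = (4*(x₃-r₃)*(r₃-x₂))/(r₃-r₂) from by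
        field_simp,
      lt_div_iff₀ hb]
    nlinarith [G1]
  · rw [h1u, h1v]
    have hpos1 : (0:ℝ) < 4*((r₂-x₁)/(r₂-r₁))*((r₃-x₂)/(r₃-r₂)) := by positivity
    have hpos2 : (0:ℝ) < 4*(r₂-x₁)*(r₃-x₂) := by positivity
    have e2 : 1/(4*((r₂-x₁)/(r₂-r₁))*((r₃-x₂)/(r₃-r₂))) =
        ((r₂-r₁)*(r₃-r₂))/(4*(r₂-x₁)*(r₃-x₂)) := by
      rw [div_eq_div_iff hpos1.ne' hpos2.ne']
      field_simp
    rw [e2, div_lt_div_iff₀ hcc hpos2]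
    exact G2
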